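/- arXiv:2011.14849 — 5 statements merged into one kernel-verified Lean document; each statement's English description precedes it below -/
import Mathlib

section
/- Let G be the binary choice gadget: vertices a, b, c, d, e, α, β with edges aα, aβ, bc, cα, cβ, αd, βd, de, and suppose in a larger graph G' containing this gadget the only vertices with neighbors outside the gadget are α and β. Then every locating-dominating set S of G' satisfies: S ∩ {a, α, β} ≠ ∅, S ∩ {b, c} ≠ ∅, and S ∩ {d, e} ≠ ∅; consequently |S ∩ {a,b,c,d,e,α,β}| ≥ 3. -/
/-- A locating-dominating set of a simple graph. -/
def IsLocatingDominating {V : Type*} (G : SimpleGraph V) (D : Set V) : Prop :=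
  (∀ v, v ∉ D → ∃ u ∈ D, G.Adj v u) ∧
  ∀ u v, u ∉ D → v ∉ D → u ≠ v →
    G.neighborSet u ∩ D ≠ G.neighborSet v ∩ D

theorem binaryChoiceGadget_three_mem {V : Type*} (G : SimpleGraph V)
    (a b c d e α β : V)
    (hnodup : ([a, b, c, d, e, α, β] : List V).Nodup)
    (ha : G.neighborSet a = {α, β})
    (hb : G.neighborSet b = {c})
    (hc : G.neighborSet c = {b, α, β})
    (hd : G.neighborSet d = {α, β, e})
    (he : G.neighborSet e = {d})
    (S : Set V) (hS : IsLocatingDominating G S) :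
    (a ∈ S ∨ α ∈ S ∨ β ∈ S) ∧ (b ∈ S ∨ c ∈ S) ∧ (d ∈ S ∨ e ∈ S) ∧
      3 ≤ (S ∩ {a, b, c, d, e, α, β}).ncard := by
  simp only [List.nodup_cons, List.mem_cons, List.mem_singleton, List.not_mem_nil,
    List.nodup_nil, not_or, List.mem_singleton] at hnodup
  obtain ⟨hdom, -⟩ := hS
  have h1 : a ∈ S ∨ α ∈ S ∨ β ∈ S := by
    by_contra h
    push_neg at h
    obtain ⟨ha', hα', hβ'⟩ := h
    obtain ⟨u, huS, hadj⟩ := hdom a ha'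
    have hu : u ∈ G.neighborSet a := hadj
    rw [ha] at hu
    rcases hu with rfl | hu
    · exact hα' huS
    · rw [Set.mem_singleton_iff] at hu; subst hu; exact hβ' huS
  have h2 : b ∈ S ∨ c ∈ S := by
    by_contra h
    push_neg at h
    obtain ⟨hb', hc'⟩ := h
    obtain ⟨u, huS, hadj⟩ := hdom b hb'
    have hu : u ∈ G.neighborSet b := hadj
    rw [hb, Set.mem_singleton_iff] at hu
    subst hu; exact hc' huS
  have h3 : d ∈ S ∨ e ∈ S := by
    by_contra h
    push_neg at h
    obtain ⟨hd', he'⟩ := h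
    obtain ⟨u, huS, hadj⟩ := hdom e he'
    have hu : u ∈ G.neighborSet e := hadj
    rw [he, Set.mem_singleton_iff] at hu
    subst hu; exact hd' huS
  refine ⟨h1, h2, h3, ?_⟩
  obtain ⟨x1, hx1, hx1S⟩ : ∃ x, (x = a ∨ x = α ∨ x = β) ∧ x ∈ S := by
    rcases h1 with h | h | h
    exacts [⟨a, Or.inl rfl, h⟩, ⟨α, Or.inr (Or.inl rfl), h⟩, ⟨β, Or.inr (Or.inr rfl), h⟩]
  obtain ⟨x2, hx2, hx2S⟩ : ∃ x, (x = b ∨ x = c) ∧ x ∈ S := by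
    rcases h2 with h | h
    exacts [⟨b, Or.inl rfl, h⟩, ⟨c, Or.inr rfl, h⟩]
  obtain ⟨x3, hx3, hx3S⟩ : ∃ x, (x = d ∨ x = e) ∧ x ∈ S := by
    rcases h3 with h | h
    exacts [⟨d, Or.inl rfl, h⟩, ⟨e, Or.inr rfl, h⟩]
  have h12 : x1 ≠ x2 := by
    rcases hx1 with rfl | rfl | rfl <;> rcases hx2 with rfl | rfl <;> simp_all <;> tauto
  have h13 : x1 ≠ x3 := by
    rcases hx1 with rfl | rfl | rfl <;> rcases hx3 with rfl | rfl <;> simp_all <;> tauto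
  have h23 : x2 ≠ x3 := by
    rcases hx2 with rfl | rfl <;> rcases hx3 with rfl | rfl <;> simp_all <;> tauto
  have hsub : ({x1, x2, x3} : Set V) ⊆ S ∩ {a, b, c, d, e, α, β} := by
    intro y hy
    rcases hy with rfl | rfl | rfl
    · exact ⟨hx1S, by rcases hx1 with rfl | rfl | rfl <;> simp⟩
    · exact ⟨hx2S, by rcases hx2 with rfl | rfl <;> simp⟩
    · exact ⟨hx3S, by rcases hx3 with rfl | rfl <;> simp⟩
  have hfin : (S ∩ {a, b, c, d, e, α, β} : Set V).Finite :=
    Set.Finite.subset (Set.toFinite _) Set.inter_subset_right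
  have hcard : ({x1, x2, x3} : Set V).ncard = 3 := by
    rw [Set.ncard_insert_of_notMem (by simp [h12, h13]), Set.ncard_pair h23]
  calc 3 = ({x1, x2, x3} : Set V).ncard := hcard.symm
    _ ≤ _ := Set.ncard_le_ncard hsub hfin
end

section
/- Let Q and Q' be two disjoint cliques of size M ≥ 2 in a graph G, joined by a perfect matching, such that every vertex of Q' has no neighbor outside Q ∪ Q' except possibly one common vertex γ adjacent to all of Q ∪ Q' (i.e., all vertices of Q' have the same neighborhood outside Q ∪ Q'). If D is a locating-dominating set of G, then at most one edge of the perfect matching has both endpoints outside D; equivalently |D ∩ (Q ∪ Q')| ≥ M − 1. -/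
theorem matched_cliques_intersection {V : Type*} [Fintype V]
    (G : SimpleGraph V) (M : ℕ) (hM : 2 ≤ M)
    (q q' : Fin M → V)
    (hinj : Function.Injective q) (hinj' : Function.Injective q')
    (hdisj : Disjoint (Set.range q) (Set.range q'))
    (hQ : ∀ i j, i ≠ j → G.Adj (q i) (q j))
    (hQ' : ∀ i j, i ≠ j → G.Adj (q' i) (q' j))
    (hmatch : ∀ i, G.Adj (q i) (q' i))
    (hnomatch : ∀ i j, i ≠ j → ¬ G.Adj (q i) (q' j))
    (hout : ∀ i j,
      {w | w ∉ Set.range q ∪ Set.range q' ∧ G.Adj (q' i) w} =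
      {w | w ∉ Set.range q ∪ Set.range q' ∧ G.Adj (q' j) w})
    (D : Set V) (hD : IsLocatingDominating G D) :
    ({i : Fin M | q i ∉ D ∧ q' i ∉ D}).ncard ≤ 1 ∧
      M - 1 ≤ (D ∩ (Set.range q ∪ Set.range q')).ncard := by
  classical
  obtain ⟨hdom, hloc⟩ := hD
  set B : Set (Fin M) := {i : Fin M | q i ∉ D ∧ q' i ∉ D} with hB
  have key : ∀ i j : Fin M, i ≠ j → q i ∉ D → q' j ∉ D →
      ∀ w ∈ G.neighborSet (q' i) ∩ D, w ∈ G.neighborSet (q' j) ∩ D := by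
    rintro i j hij hqi hq'j w ⟨hadj, hwD⟩
    refine ⟨?_, hwD⟩
    by_cases hw : w ∈ Set.range q ∪ Set.range q'
    · rcases hw with ⟨k, rfl⟩ | ⟨k, rfl⟩
      · by_cases hk : k = i
        · subst hk; exact absurd hwD hqi
        · exact absurd (G.adj_symm hadj) (hnomatch k i hk)
      · have hki : k ≠ i := by rintro rfl; exact G.irrefl hadj
        by_cases hkj : k = j
        · subst hkj; exact absurd hwD hq'j
        · exact G.adj_symm (hQ' k j hkj)
    · have hmem : w ∈ {w | w ∉ Set.range q ∪ Set.range q' ∧ G.Adj (q' i) w} :=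
        ⟨hw, hadj⟩
      rw [hout i j] at hmem
      exact hmem.2
  have huniq : ∀ i ∈ B, ∀ j ∈ B, i = j := by
    intro i hi j hj
    by_contra hij
    have hne : q' i ≠ q' j := fun h => hij (hinj' h)
    refine hloc (q' i) (q' j) hi.2 hj.2 hne ?_
    exact Set.Subset.antisymm (key i j hij hi.1 hj.2) (key j i (Ne.symm hij) hj.1 hi.2)
  have h1 : B.ncard ≤ 1 := (Set.ncard_le_one (Set.toFinite _)).2 huniq
  refine ⟨h1, ?_⟩
  have hcompl : Bᶜ.ncard = M - B.ncard := by
    have := Set.ncard_add_ncard_compl B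
    simp only [Nat.card_eq_fintype_card, Fintype.card_fin] at this
    omega
  have hBc : M - 1 ≤ Bᶜ.ncard := by omega
  refine le_trans hBc ?_
  apply Set.ncard_le_ncard_of_injOn (fun i => if q i ∈ D then q i else q' i)
  · intro i hi
    have hi' : q i ∈ D ∨ q' i ∈ D := by
      by_contra h
      push_neg at h
      exact hi ⟨h.1, h.2⟩
    by_cases hq : q i ∈ D
    · simp only [hq, if_true]
      exact ⟨hq, Or.inl ⟨i, rfl⟩⟩
    · simp only [hq, if_false]
      exact ⟨hi'.resolve_left hq, Or.inr ⟨i, rfl⟩⟩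
  · intro i _ j _ hf
    by_cases hqi : q i ∈ D <;> by_cases hqj : q j ∈ D <;>
      simp only [hqi, hqj, if_true, if_false] at hf
    · exact hinj hf
    · exact absurd hf (Set.disjoint_left.1 hdisj ⟨i, rfl⟩ ∘ fun h => h ▸ ⟨j, rfl⟩)
    · exact absurd hf.symm (Set.disjoint_left.1 hdisj ⟨j, rfl⟩ ∘ fun h => h ▸ ⟨i, rfl⟩)
    · exact hinj' hf
end

section
/- Let T be a subtree of a connected graph G with ℓ leaves (where ℓ ≥ 2), and suppose T does not span G. Then G has a spanning tree with at least ℓ leaves. -/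
open SimpleGraph

private lemma aux_cross {V : Type*} {G : SimpleGraph V} {S : Set V} :
    ∀ {a b : V} (_ : G.Walk a b), a ∈ S → b ∉ S →
      ∃ v w, v ∈ S ∧ w ∉ S ∧ G.Adj v w := by
  intro a b p
  induction p with
  | nil => intro ha hb; exact absurd ha hb
  | @cons u c d h p ih =>
    intro ha hb
    by_cases hc : c ∈ S
    · exact ih hc hb
    · exact ⟨u, c, ha, hc, h⟩

private lemma aux_deg1 {V' : Type*} {H : SimpleGraph V'} {w v : V'}
    (hw : H.neighborSet w ⊆ {v}) {x : V'} {c : H.Walk x x}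
    (hc : c.IsCycle) : w ∉ c.support := by
  classical
  intro hmem
  have hc' : (c.rotate w hmem).IsCycle := hc.rotate hmem
  have h3 := hc'.three_le_length
  generalize hdef : c.rotate w hmem = c' at *
  cases c' with
  | nil => simp at h3
  | @cons _ y _ h p =>
    have hy : y = v := hw h
    rw [Walk.cons_isCycle_iff] at hc'
    obtain ⟨hp, he⟩ := hc'
    have hvw : w ≠ y := H.ne_of_adj h
    obtain ⟨z, h2, q, hq⟩ := Walk.exists_eq_cons_of_ne hvw p.reverse
    have hz : z = y := (hw h2).trans hy.symm
    subst hz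
    have hqp : q.IsPath := by
      have h4 := hp.reverse
      rw [hq] at h4
      exact h4.of_cons
    have hqnil : q = Walk.nil := (Walk.isPath_iff_eq_nil (p := q)).mp hqp
    subst hqnil
    have hlen : p.length = 1 := by
      have := congrArg Walk.length hq
      simpa [Walk.length_reverse] using this
    simp [hlen] at h3

private lemma aux_lift {V : Type*} {G : SimpleGraph V} {Hs Ks : G.Subgraph} (hle : Hs ≤ Ks) :
    ∀ {a b : ↑Ks.verts} (p : Ks.coe.Walk a b) (ha : ↑a ∈ Hs.verts)
      (_ : ∀ d ∈ p.darts, Hs.Adj ↑d.fst ↑d.snd),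
      ∃ (hb : ↑b ∈ Hs.verts) (q : Hs.coe.Walk ⟨↑a, ha⟩ ⟨↑b, hb⟩),
        q.map (SimpleGraph.Subgraph.inclusion hle) = p := by
  intro a b p
  induction p with
  | nil => intro ha _; exact ⟨ha, Walk.nil, rfl⟩
  | @cons u c d h p ih =>
    intro ha hd
    have hA : Hs.Adj ↑u ↑c := hd ⟨(u, c), h⟩ (by simp [Walk.darts_cons])
    have hc : ↑c ∈ Hs.verts := Hs.edge_vert hA.symm
    obtain ⟨hb, q, hq⟩ := ih hc (fun d' hd' => hd _ (by simp [Walk.darts_cons, hd']))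
    refine ⟨hb, Walk.cons (show Hs.coe.Adj ⟨↑u, ha⟩ ⟨↑c, hc⟩ from hA) q, ?_⟩
    rw [Walk.map_cons, hq]; rfl

private def lset {V : Type*} {G : SimpleGraph V} (T : G.Subgraph) : Set V :=
  {x | x ∈ T.verts ∧ (T.neighborSet x).ncard = 1}

private lemma lset_card {V : Type*} {G : SimpleGraph V} (T : G.Subgraph) :
    {v : T.verts | (T.coe.neighborSet v).ncard = 1}.ncard = (lset T).ncard := by
  have h1 : ∀ v : T.verts, (T.coe.neighborSet v).ncard = (T.neighborSet ↑v).ncard := by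
    intro v
    rw [← Set.ncard_image_of_injective (T.coe.neighborSet v) Subtype.val_injective]
    congr 1
    ext x
    simp only [Set.mem_image, SimpleGraph.mem_neighborSet, Subgraph.coe_adj,
      Subgraph.mem_neighborSet]
    constructor
    · rintro ⟨u, hu, rfl⟩; exact hu
    · intro hx; exact ⟨⟨x, T.edge_vert hx.symm⟩, hx, rfl⟩
  rw [← Set.ncard_image_of_injective _ Subtype.val_injective]
  congr 1
  ext x
  simp only [Set.mem_image, Set.mem_setOf_eq, lset]
  constructor
  · rintro ⟨u, hu, rfl⟩
    exact ⟨u.2, by rw [← h1 u]; exact hu⟩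
  · rintro ⟨hx, hn⟩
    exact ⟨⟨x, hx⟩, by rw [h1 ⟨x, hx⟩]; exact hn, rfl⟩

private lemma aux_step {V : Type*} [Fintype V] {G : SimpleGraph V} (hG : G.Connected)
    (T : G.Subgraph) (hT : T.coe.IsTree) (hns : ¬ T.IsSpanning) :
    ∃ (T' : G.Subgraph) (w : V), w ∉ T.verts ∧ T'.verts = insert w T.verts ∧
      T'.coe.IsTree ∧ (lset T).ncard ≤ (lset T').ncard := by
  classical
  have hne : T.verts.Nonempty := Set.nonempty_coe_sort.mp hT.isConnected.nonempty
  obtain ⟨a, haT⟩ := hne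
  obtain ⟨b, hbT⟩ := not_forall.mp hns
  obtain ⟨v, w, hv, hw, hadj⟩ := aux_cross ((hG.preconnected a b).some) haT hbT
  set T' := T ⊔ G.subgraphOfAdj hadj with hT'def
  have hvne : v ≠ w := G.ne_of_adj hadj
  have hverts : T'.verts = insert w T.verts := by
    rw [hT'def]
    ext x
    simp only [Subgraph.verts_sup, subgraphOfAdj_verts, Set.mem_union, Set.mem_insert_iff,
      Set.mem_singleton_iff]
    constructor
    · rintro (h | rfl | rfl)
      · right; exact h
      · right; exact hv
      · left; rfl
    · rintro (rfl | h)
      · right; right; rfl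
      · left; exact h
  have hwv : w ∈ T'.verts := by rw [hverts]; exact Set.mem_insert _ _
  have hvv : v ∈ T'.verts := by rw [hverts]; exact Set.mem_insert_of_mem _ hv
  have hconn : T'.Connected := by
    have hTc : T.Connected := Subgraph.connected_iff'.mpr hT.isConnected
    exact Subgraph.connected_sup hTc.preconnected (Subgraph.subgraphOfAdj_connected hadj).preconnected ⟨v, by simp [hv]⟩
  have hacyc : T'.coe.IsAcyclic := by
    intro x c hc
    have hnbr : T'.coe.neighborSet ⟨w, hwv⟩ ⊆ {(⟨v, hvv⟩ : T'.verts)} := by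
      rintro ⟨z, hz⟩ hzadj
      simp only [SimpleGraph.mem_neighborSet, Subgraph.coe_adj, hT'def, Subgraph.sup_adj,
        subgraphOfAdj_adj] at hzadj
      rcases hzadj with h1 | h1
      · exact absurd (T.edge_vert h1) hw
      · rcases Sym2.eq_iff.mp h1 with ⟨h2, h3⟩ | ⟨h2, h3⟩
        · exact absurd h2 hvne
        · simp only [Set.mem_singleton_iff]; exact Subtype.ext h2.symm
    have hwns : (⟨w, hwv⟩ : T'.verts) ∉ c.support := aux_deg1 hnbr hc
    have hdT : ∀ d ∈ c.darts, T.Adj ↑d.fst ↑d.snd := by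
      intro d hd
      have hda := d.adj
      simp only [Subgraph.coe_adj, hT'def, Subgraph.sup_adj, subgraphOfAdj_adj] at hda
      rcases hda with h1 | h1
      · exact h1
      · exfalso
        rcases Sym2.eq_iff.mp h1 with ⟨h2, h3⟩ | ⟨h2, h3⟩
        · have hds : d.snd = ⟨w, hwv⟩ := Subtype.ext h3.symm
          exact hwns (hds ▸ Walk.dart_snd_mem_support_of_mem_darts c hd)
        · have hds : d.fst = ⟨w, hwv⟩ := Subtype.ext h3.symm
          exact hwns (hds ▸ Walk.dart_fst_mem_support_of_mem_darts c hd)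
    cases c with
    | nil => exact Walk.IsCycle.not_of_nil hc
    | @cons _ y _ h p =>
      have hA : T.Adj ↑x ↑y := hdT ⟨(x, y), h⟩ (by simp [Walk.darts_cons])
      have hxT : ↑x ∈ T.verts := T.edge_vert hA
      obtain ⟨hb2, q, hq⟩ := aux_lift (le_sup_left : T ≤ T') (Walk.cons h p) hxT hdT
      have hqc : q.IsCycle :=
        (Walk.map_isCycle_iff_of_injective
          (Subgraph.inclusion.injective (le_sup_left : T ≤ T'))).mp (by rw [hq]; exact hc)
      exact hT.2 q hqc
  have hsub : (lset T \ {v}) ∪ {w} ⊆ lset T' := by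
    intro x hx
    simp only [Set.mem_union, Set.mem_diff, Set.mem_singleton_iff, lset,
      Set.mem_setOf_eq] at hx ⊢
    rcases hx with ⟨⟨hxv, hx1⟩, hxne⟩ | rfl
    · refine ⟨by rw [hverts]; exact Set.mem_insert_of_mem _ hxv, ?_⟩
      have hns' : T'.neighborSet x = T.neighborSet x := by
        rw [hT'def]
        ext z
        simp only [Subgraph.mem_neighborSet, Subgraph.sup_adj, subgraphOfAdj_adj]
        constructor
        · rintro (h1 | h1)
          · exact h1
          · exfalso
            rcases Sym2.eq_iff.mp h1 with ⟨h2, h3⟩ | ⟨h2, h3⟩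
            · exact hxne h2.symm
            · exact hw (h3 ▸ hxv)
        · exact Or.inl
      rw [hns']; exact hx1
    · refine ⟨by rw [hverts]; exact Set.mem_insert _ _, ?_⟩
      have hns' : T'.neighborSet x = {v} := by
        rw [hT'def]
        ext z
        simp only [Subgraph.mem_neighborSet, Subgraph.sup_adj, subgraphOfAdj_adj,
          Set.mem_singleton_iff]
        constructor
        · rintro (h1 | h1)
          · exact absurd (T.edge_vert h1) hw
          · rcases Sym2.eq_iff.mp h1 with ⟨h2, h3⟩ | ⟨h2, h3⟩
            · exact absurd h2 hvne
            · exact h2.symm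
        · rintro rfl; right; exact Sym2.eq_swap
      rw [hns', Set.ncard_singleton]
  have hcount : (lset T).ncard ≤ (lset T').ncard := by
    have h1 : ((lset T \ {v}) ∪ {w}).ncard ≤ (lset T').ncard :=
      Set.ncard_le_ncard hsub (Set.toFinite _)
    have hwn : w ∉ lset T \ {v} := fun h => hw h.1.1
    have h2 : ((lset T \ {v}) ∪ {w}).ncard = (lset T \ {v}).ncard + 1 := by
      rw [Set.union_singleton, Set.ncard_insert_of_notMem hwn (Set.toFinite _)]
    by_cases hvmem : v ∈ lset T
    · have h3 := Set.ncard_diff_singleton_add_one hvmem (Set.toFinite _)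
      omega
    · rw [Set.diff_singleton_eq_self hvmem] at h1 h2
      omega
  exact ⟨T', w, hw, hverts, ⟨Subgraph.connected_iff'.mp hconn, hacyc⟩, hcount⟩

theorem subtree_extends_to_spanning_tree {V : Type*} [Fintype V]
    (G : SimpleGraph V) (hG : G.Connected)
    (T : G.Subgraph) (hT : T.coe.IsTree)
    (ℓ : ℕ) (hℓ : 2 ≤ ℓ)
    (hleaves : ℓ ≤ {v : T.verts | (T.coe.neighborSet v).ncard = 1}.ncard)
    (hns : ¬ T.IsSpanning) :
    ∃ T' : G.Subgraph, T'.coe.IsTree ∧ T'.IsSpanning ∧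
      ℓ ≤ {v : T'.verts | (T'.coe.neighborSet v).ncard = 1}.ncard := by
  classical
  have main : ∀ (n : ℕ) (T : G.Subgraph), T.coe.IsTree → ℓ ≤ (lset T).ncard →
      (T.vertsᶜ).ncard ≤ n →
      ∃ T' : G.Subgraph, T'.coe.IsTree ∧ T'.IsSpanning ∧ ℓ ≤ (lset T').ncard := by
    intro n
    induction n with
    | zero =>
      intro T hT hl hcard
      refine ⟨T, hT, ?_, hl⟩
      intro v
      by_contra hv
      have hpos : 0 < (T.vertsᶜ).ncard :=
        (Set.ncard_pos (Set.toFinite _)).mpr ⟨v, hv⟩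
      omega
    | succ n ih =>
      intro T hT hl hcard
      by_cases hsp : T.IsSpanning
      · exact ⟨T, hT, hsp, hl⟩
      · obtain ⟨T', w, hwT, hverts, hT', hle'⟩ := aux_step hG T hT hsp
        apply ih T' hT' (hl.trans hle')
        have hcompl : T'.vertsᶜ = T.vertsᶜ \ {w} := by
          rw [hverts]; ext z
          simp only [Set.mem_compl_iff, Set.mem_insert_iff, Set.mem_diff,
            Set.mem_singleton_iff]
          tauto
        have h4 := Set.ncard_diff_singleton_add_one (show w ∈ T.vertsᶜ from hwT)
          (Set.toFinite _)
        rw [hcompl]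
        omega
  obtain ⟨T', h1, h2, h3⟩ := main (T.vertsᶜ).ncard T hT
    (by rw [← lset_card]; exact hleaves) le_rfl
  exact ⟨T', h1, h2, by rw [lset_card]; exact h3⟩
end

section
/- Every locating-dominating set of the path Pₙ on n ≥ 2 vertices has size at least ⌈2n/5⌉. -/
namespace PathLDAux

open SimpleGraph

variable {n : ℕ} {D : Set (Fin n)}

/-- count of D in [a, b) -/
noncomputable def cnt (D : Set (Fin n)) (a b : ℕ) : ℕ :=
  (D ∩ {i : Fin n | a ≤ i.val ∧ i.val < b}).ncard

lemma cnt_full : cnt D 0 n = D.ncard := by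
  unfold cnt
  congr 1
  apply Set.inter_eq_left.mpr
  intro i _
  exact ⟨Nat.zero_le _, i.isLt⟩

lemma cnt_glue {a b c : ℕ} (hab : a ≤ b) (hbc : b ≤ c) :
    cnt D a b + cnt D b c ≤ cnt D a c := by
  unfold cnt
  rw [← Set.ncard_union_eq (by
    apply Set.disjoint_left.mpr
    rintro x ⟨_, _, h2⟩ ⟨_, h3, _⟩
    omega) (Set.toFinite _) (Set.toFinite _)]
  apply Set.ncard_le_ncard _ (Set.toFinite _)
  rintro x (⟨hx, h1, h2⟩ | ⟨hx, h1, h2⟩) <;> exact ⟨hx, by omega, by omega⟩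

lemma cnt_two {a b : ℕ} {i j : Fin n} (hi : i ∈ D) (hj : j ∈ D) (hij : i ≠ j)
    (hia : a ≤ i.val) (hib : i.val < b) (hja : a ≤ j.val) (hjb : j.val < b) :
    2 ≤ cnt D a b := by
  unfold cnt
  rw [show (2:ℕ) = 1 + 1 from rfl]
  rw [Nat.add_one_le_iff, Set.one_lt_ncard_iff (Set.toFinite _)]
  exact ⟨i, j, ⟨hi, hia, hib⟩, ⟨hj, hja, hjb⟩, hij⟩

lemma cnt_one {a b : ℕ} {i : Fin n} (hi : i ∈ D) (hia : a ≤ i.val) (hib : i.val < b) :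
    1 ≤ cnt D a b := by
  unfold cnt
  exact (Set.ncard_pos (Set.toFinite _)).mpr ⟨i, hi, hia, hib⟩

lemma dom (hD : IsLocatingDominating (SimpleGraph.pathGraph n) D) {v : Fin n}
    (hv : v ∉ D) : ∃ u : Fin n, u ∈ D ∧ (v.val + 1 = u.val ∨ u.val + 1 = v.val) := by
  obtain ⟨u, hu, h⟩ := hD.1 v hv
  rw [pathGraph_adj] at h
  exact ⟨u, hu, h⟩

lemma window (hD : IsLocatingDominating (SimpleGraph.pathGraph n) D) {a : ℕ}
    (h5 : a + 5 ≤ n) : 2 ≤ cnt D a (a + 5) := by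
  by_contra hc
  have H : ∀ i j : Fin n, i ∈ D → j ∈ D → a ≤ i.val → i.val < a + 5 →
      a ≤ j.val → j.val < a + 5 → i.val = j.val := by
    intro i j hi hj h1 h2 h3 h4
    by_contra hne
    exact hc (cnt_two hi hj (fun he => hne (by rw [he])) h1 h2 h3 h4)
  by_cases h2 : (⟨a + 2, by omega⟩ : Fin n) ∈ D
  · -- every D element in the window has value a+2
    have notin : ∀ i : Fin n, i ∈ D → a ≤ i.val → i.val < a + 5 → i.val = a + 2 := by
      intro i hi h1 h2'
      have := H i ⟨a + 2, by omega⟩ hi h2 h1 h2' (by simp) (by simp)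
      simpa using this
    have h1D : (⟨a + 1, by omega⟩ : Fin n) ∉ D := by
      intro hm; have := notin _ hm (by simp) (by simp); simp at this
    have h3D : (⟨a + 3, by omega⟩ : Fin n) ∉ D := by
      intro hm; have := notin _ hm (by simp) (by simp); simp at this
    have hfp : (pathGraph n).neighborSet ⟨a + 1, by omega⟩ ∩ D =
        (pathGraph n).neighborSet ⟨a + 3, by omega⟩ ∩ D := by
      ext x
      simp only [Set.mem_inter_iff, mem_neighborSet, pathGraph_adj, Fin.val_mk]
      constructor
      · rintro ⟨hadj, hxD⟩
        refine ⟨?_, hxD⟩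
        have hx2 : x.val = a + 2 := by
          rcases hadj with h | h
          · omega
          · exact absurd (notin x hxD (by omega) (by omega)) (by omega)
        omega
      · rintro ⟨hadj, hxD⟩
        refine ⟨?_, hxD⟩
        have hx2 : x.val = a + 2 := by
          rcases hadj with h | h
          · exact absurd (notin x hxD (by omega) (by omega)) (by omega)
          · omega
        omega
    exact hD.2 _ _ h1D h3D (by simp [Fin.ext_iff]) hfp
  · obtain ⟨u, hu, hadj⟩ := dom hD h2
    simp only [Fin.val_mk] at hadj
    rcases hadj with h | h
    · -- u.val = a + 3
      have h1D : (⟨a + 1, by omega⟩ : Fin n) ∉ D := by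
        intro hm
        have := H _ u hm hu (by simp) (by simp) (by omega) (by omega)
        simp at this; omega
      obtain ⟨w, hw, hadjw⟩ := dom hD h1D
      simp only [Fin.val_mk] at hadjw
      have := H w u hw hu (by omega) (by omega) (by omega) (by omega)
      omega
    · -- u.val = a + 1
      have h3D : (⟨a + 3, by omega⟩ : Fin n) ∉ D := by
        intro hm
        have := H _ u hm hu (by simp) (by simp) (by omega) (by omega)
        simp at this; omega
      obtain ⟨w, hw, hadjw⟩ := dom hD h3D
      simp only [Fin.val_mk] at hadjw
      have := H w u hw hu (by omega) (by omega) (by omega) (by omega)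
      omega

lemma left2 (hD : IsLocatingDominating (SimpleGraph.pathGraph n) D) (hn : 2 ≤ n) :
    1 ≤ cnt D 0 2 := by
  by_cases h0 : (⟨0, by omega⟩ : Fin n) ∈ D
  · exact cnt_one h0 (by simp) (by simp)
  · obtain ⟨u, hu, h⟩ := dom hD h0
    simp only [Fin.val_mk] at h
    exact cnt_one hu (by omega) (by omega)

lemma left4 (hD : IsLocatingDominating (SimpleGraph.pathGraph n) D) (hn : 4 ≤ n) :
    2 ≤ cnt D 0 4 := by
  by_contra hc
  have H : ∀ i j : Fin n, i ∈ D → j ∈ D → i.val < 4 → j.val < 4 → i.val = j.val := by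
    intro i j hi hj h1 h2
    by_contra hne
    exact hc (cnt_two hi hj (fun he => hne (by rw [he])) (by omega) h1 (by omega) h2)
  by_cases h0 : (⟨0, by omega⟩ : Fin n) ∈ D
  · have h2D : (⟨2, by omega⟩ : Fin n) ∉ D := by
      intro hm
      have h' := H _ _ hm h0 (by simp) (by simp)
      simp only [Fin.val_mk] at h'
      omega
    obtain ⟨w, hw, hadjw⟩ := dom hD h2D
    simp only [Fin.val_mk] at hadjw
    have h' := H w _ hw h0 (by omega) (by simp)
    simp only [Fin.val_mk] at h'
    omega
  · obtain ⟨u, hu, hadj⟩ := dom hD h0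
    simp only [Fin.val_mk] at hadj
    have hu1 : u.val = 1 := by omega
    have h2D : (⟨2, by omega⟩ : Fin n) ∉ D := by
      intro hm
      have h' := H _ _ hm hu (by simp) (by omega)
      simp only [Fin.val_mk] at h'
      omega
    have hfp : (pathGraph n).neighborSet ⟨0, by omega⟩ ∩ D =
        (pathGraph n).neighborSet ⟨2, by omega⟩ ∩ D := by
      ext x
      simp only [Set.mem_inter_iff, mem_neighborSet, pathGraph_adj, Fin.val_mk]
      constructor
      · rintro ⟨hadjx, hxD⟩
        exact ⟨by omega, hxD⟩
      · rintro ⟨hadjx, hxD⟩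
        refine ⟨?_, hxD⟩
        have hx1 : x.val = 1 := by
          rcases hadjx with h | h
          · have h' := H x u hxD hu (by omega) (by omega)
            omega
          · omega
        omega
    exact hD.2 _ _ h0 h2D (by simp [Fin.ext_iff]) hfp

lemma right2 (hD : IsLocatingDominating (SimpleGraph.pathGraph n) D) (hn : 2 ≤ n) :
    1 ≤ cnt D (n - 2) n := by
  by_cases h0 : (⟨n - 1, by omega⟩ : Fin n) ∈ D
  · exact cnt_one h0 (by simp only [Fin.val_mk]; omega) (by simp only [Fin.val_mk]; omega)
  · obtain ⟨u, hu, h⟩ := dom hD h0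
    simp only [Fin.val_mk] at h
    have hult := u.isLt
    exact cnt_one hu (by omega) (by omega)

lemma right4 (hD : IsLocatingDominating (SimpleGraph.pathGraph n) D) (hn : 4 ≤ n) :
    2 ≤ cnt D (n - 4) n := by
  by_contra hc
  have H : ∀ i j : Fin n, i ∈ D → j ∈ D → n - 4 ≤ i.val → n - 4 ≤ j.val →
      i.val = j.val := by
    intro i j hi hj h1 h2
    by_contra hne
    exact hc (cnt_two hi hj (fun he => hne (by rw [he])) h1 i.isLt h2 j.isLt)
  by_cases h0 : (⟨n - 1, by omega⟩ : Fin n) ∈ D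
  · have h2D : (⟨n - 3, by omega⟩ : Fin n) ∉ D := by
      intro hm
      have h' := H _ _ hm h0 (by simp only [Fin.val_mk]; omega)
        (by simp only [Fin.val_mk]; omega)
      simp only [Fin.val_mk] at h'
      omega
    obtain ⟨w, hw, hadjw⟩ := dom hD h2D
    simp only [Fin.val_mk] at hadjw
    have hwlt := w.isLt
    have h' := H w _ hw h0 (by omega) (by simp only [Fin.val_mk]; omega)
    simp only [Fin.val_mk] at h'
    omega
  · obtain ⟨u, hu, hadj⟩ := dom hD h0
    simp only [Fin.val_mk] at hadj
    have hult := u.isLt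
    have hu1 : u.val = n - 2 := by omega
    have h2D : (⟨n - 3, by omega⟩ : Fin n) ∉ D := by
      intro hm
      have h' := H _ _ hm hu (by simp only [Fin.val_mk]; omega) (by omega)
      simp only [Fin.val_mk] at h'
      omega
    have hfp : (pathGraph n).neighborSet ⟨n - 1, by omega⟩ ∩ D =
        (pathGraph n).neighborSet ⟨n - 3, by omega⟩ ∩ D := by
      ext x
      have hxlt := x.isLt
      simp only [Set.mem_inter_iff, mem_neighborSet, pathGraph_adj, Fin.val_mk]
      constructor
      · rintro ⟨hadjx, hxD⟩
        exact ⟨by omega, hxD⟩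
      · rintro ⟨hadjx, hxD⟩
        refine ⟨?_, hxD⟩
        have hx1 : x.val = n - 2 := by
          rcases hadjx with h | h
          · omega
          · have h' := H x u hxD hu (by omega) (by omega)
            omega
        omega
    exact hD.2 _ _ h0 h2D (by simp [Fin.ext_iff]; omega) hfp

lemma three (hD : IsLocatingDominating (SimpleGraph.pathGraph n) D) (h3 : n = 3) :
    2 ≤ cnt D 0 n := by
  subst h3
  by_contra hc
  have H : ∀ i j : Fin 3, i ∈ D → j ∈ D → i.val = j.val := by
    intro i j hi hj
    by_contra hne
    exact hc (cnt_two hi hj (fun he => hne (by rw [he])) (by omega) i.isLt (by omega) j.isLt)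
  by_cases h0 : (⟨0, by omega⟩ : Fin 3) ∈ D
  · have h2D : (⟨2, by omega⟩ : Fin 3) ∉ D := by
      intro hm
      have h' := H _ _ hm h0
      simp only [Fin.val_mk] at h'
      omega
    obtain ⟨w, hw, hadjw⟩ := dom hD h2D
    simp only [Fin.val_mk] at hadjw
    have hwlt := w.isLt
    have h' := H w _ hw h0
    simp only [Fin.val_mk] at h'
    omega
  · obtain ⟨u, hu, hadj⟩ := dom hD h0
    simp only [Fin.val_mk] at hadj
    have hu1 : u.val = 1 := by omega
    have h2D : (⟨2, by omega⟩ : Fin 3) ∉ D := by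
      intro hm
      have h' := H _ _ hm hu
      simp only [Fin.val_mk] at h'
      omega
    have hfp : (pathGraph 3).neighborSet ⟨0, by omega⟩ ∩ D =
        (pathGraph 3).neighborSet ⟨2, by omega⟩ ∩ D := by
      ext x
      have hxlt := x.isLt
      simp only [Set.mem_inter_iff, mem_neighborSet, pathGraph_adj, Fin.val_mk]
      constructor
      · rintro ⟨hadjx, hxD⟩
        exact ⟨by omega, hxD⟩
      · rintro ⟨hadjx, hxD⟩
        exact ⟨by omega, hxD⟩
    exact hD.2 _ _ h0 h2D (by simp [Fin.ext_iff]) hfp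

lemma windows (hD : IsLocatingDominating (SimpleGraph.pathGraph n) D) :
    ∀ (m a : ℕ), a + 5 * m ≤ n → 2 * m ≤ cnt D a (a + 5 * m) := by
  intro m
  induction m with
  | zero => intro a _; omega
  | succ m ih =>
    intro a h
    have h1 := window hD (a := a) (by omega)
    have h2 := ih (a + 5) (by omega)
    have h3 := cnt_glue (D := D) (hab := (by omega : a ≤ a + 5))
      (hbc := (by omega : a + 5 ≤ a + 5 * (m + 1)))
    rw [show a + 5 + 5 * m = a + 5 * (m + 1) by omega] at h2
    omega

end PathLDAux

theorem path_locatingDominating_lower_bound {n : ℕ} (hn : 2 ≤ n)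
    (D : Set (Fin n))
    (hD : IsLocatingDominating (SimpleGraph.pathGraph n) D) :
    (2 * n + 4) / 5 ≤ D.ncard := by
  open PathLDAux in
  have hfull : cnt D 0 n = D.ncard := cnt_full
  have hr : n % 5 = 0 ∨ n % 5 = 1 ∨ n % 5 = 2 ∨ n % 5 = 3 ∨ n % 5 = 4 := by omega
  rcases hr with hr | hr | hr | hr | hr
  · have hw := windows hD (n / 5) 0 (by omega)
    rw [show 0 + 5 * (n / 5) = n by omega] at hw
    omega
  · have hL := left4 hD (by omega)
    have hR := right2 hD hn
    have hW := windows hD (n / 5 - 1) 4 (by omega)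
    rw [show 4 + 5 * (n / 5 - 1) = n - 2 by omega] at hW
    have g1 := cnt_glue (D := D) (hab := (by omega : 0 ≤ 4))
      (hbc := (by omega : 4 ≤ n - 2))
    have g2 := cnt_glue (D := D) (hab := (by omega : 0 ≤ n - 2))
      (hbc := (by omega : n - 2 ≤ n))
    omega
  · have hL := left2 hD hn
    have hW := windows hD (n / 5) 2 (by omega)
    rw [show 2 + 5 * (n / 5) = n by omega] at hW
    have g1 := cnt_glue (D := D) (hab := (by omega : 0 ≤ 2))
      (hbc := (by omega : 2 ≤ n))
    omega
  · by_cases h3 : n = 3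
    · have := three hD h3
      omega
    · have hL := left4 hD (by omega)
      have hR := right4 hD (by omega)
      have hW := windows hD (n / 5 - 1) 4 (by omega)
      rw [show 4 + 5 * (n / 5 - 1) = n - 4 by omega] at hW
      have g1 := cnt_glue (D := D) (hab := (by omega : 0 ≤ 4))
        (hbc := (by omega : 4 ≤ n - 4))
      have g2 := cnt_glue (D := D) (hab := (by omega : 0 ≤ n - 4))
        (hbc := (by omega : n - 4 ≤ n))
      omega
  · have hL := left4 hD (by omega)
    have hW := windows hD (n / 5) 4 (by omega)
    rw [show 4 + 5 * (n / 5) = n by omega] at hW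
    have g1 := cnt_glue (D := D) (hab := (by omega : 0 ≤ 4))
      (hbc := (by omega : 4 ≤ n))
    omega
end

section
/- Let G be the cycle Cₙ on n ≥ 4 vertices. Then every locating-dominating set of Cₙ has size at least ⌈2n/5⌉. -/
theorem cycle_locatingDominating_lower_bound {n : ℕ} (hn : 4 ≤ n)
    (D : Set (Fin n))
    (hD : IsLocatingDominating (SimpleGraph.cycleGraph n) D) :
    (2 * n + 4) / 5 ≤ D.ncard := by
  classical
  open Fin.CommRing Fin.NatCast in
  obtain ⟨m, rfl⟩ : ∃ m, n = m + 2 := ⟨n - 2, by omega⟩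
  -- helper: if j+1, j+2, j+3 ∉ D then j+2 is undominated
  have L1 : ∀ j : Fin (m + 2), j + 1 ∉ D → j + 2 ∉ D → j + 3 ∉ D → False := by
    intro j h1 h2 h3
    obtain ⟨u, hu, hadj⟩ := hD.1 (j + 2) h2
    have hmem : u ∈ ({(j + 2) - 1, (j + 2) + 1} : Set (Fin (m + 2))) := by
      rw [← SimpleGraph.cycleGraph_neighborSet]; exact hadj
    have e1 : (j + 2) - 1 = j + 1 := by ring
    have e2 : (j + 2) + 1 = j + 3 := by ring
    rw [e1, e2] at hmem
    rcases hmem with h | h <;> subst h <;> [exact h1 hu; exact h3 hu]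
  -- helper: confounding case
  have L2 : ∀ i : Fin (m + 2), i ∉ D → i + 1 ∉ D → i + 2 ∈ D → i + 3 ∉ D →
      i + 4 ∉ D → False := by
    intro i h0 h1 h2 h3 h4
    have hne : i + 1 ≠ i + 3 := by
      intro h
      have h13 : (1 : Fin (m + 2)) = 3 := add_left_cancel h
      have hv := congrArg Fin.val h13
      rw [Fin.val_one] at hv
      have h3 : ((3 : Fin (m + 2)) : ℕ) = 3 % (m + 2) := rfl
      rw [h3, Nat.mod_eq_of_lt (by omega)] at hv
      omega
    apply hD.2 (i + 1) (i + 3) h1 h3 hne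
    rw [SimpleGraph.cycleGraph_neighborSet, SimpleGraph.cycleGraph_neighborSet]
    have e1 : (i + 1) - 1 = i := by ring
    have e2 : (i + 1) + 1 = i + 2 := by ring
    have e3 : (i + 3) - 1 = i + 2 := by ring
    have e4 : (i + 3) + 1 = i + 4 := by ring
    rw [e1, e2, e3, e4]
    ext x
    simp only [Set.mem_inter_iff, Set.mem_insert_iff, Set.mem_singleton_iff]
    constructor
    · rintro ⟨h | h, hx⟩ <;> subst h
      · exact absurd hx h0
      · exact ⟨Or.inl rfl, hx⟩
    · rintro ⟨h | h, hx⟩ <;> subst h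
      · exact ⟨Or.inr rfl, hx⟩
      · exact absurd hx h4
  have key : ∀ i : Fin (m + 2),
      2 ≤ (if i ∈ D then 1 else 0) + (if i + 1 ∈ D then 1 else 0)
        + (if i + 2 ∈ D then 1 else 0) + (if i + 3 ∈ D then 1 else 0)
        + (if i + 4 ∈ D then (1:ℕ) else 0) := by
    intro i
    by_cases ha : i ∈ D <;> by_cases hb : i + 1 ∈ D <;> by_cases hc : i + 2 ∈ D <;>
      by_cases hd : i + 3 ∈ D <;> by_cases he : i + 4 ∈ D <;>
      simp only [ha, hb, hc, hd, he, if_true, if_false] <;>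
      first
        | exact (L1 i hb hc hd).elim
        | exact (L1 (i + 1) (by rwa [show i+1+1 = i+2 from by ring])
            (by rwa [show i+1+2 = i+3 from by ring])
            (by rwa [show i+1+3 = i+4 from by ring])).elim
        | exact (L1 (i - 1) (by rwa [show i-1+1 = i from by ring])
            (by rwa [show i-1+2 = i+1 from by ring])
            (by rwa [show i-1+3 = i+2 from by ring])).elim
        | exact (L2 i ha hb hc hd he).elim
        | norm_num
  -- counting
  have hsum : ∀ i : Fin (m + 2),
      (∑ k ∈ Finset.range 5, if i + (k : ℕ) ∈ D then (1:ℕ) else 0)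
        = (if i ∈ D then 1 else 0) + (if i + 1 ∈ D then 1 else 0)
        + (if i + 2 ∈ D then 1 else 0) + (if i + 3 ∈ D then 1 else 0)
        + (if i + 4 ∈ D then (1:ℕ) else 0) := by
    intro i
    simp only [Finset.sum_range_succ, Finset.sum_range_zero, Nat.cast_ofNat,
      Nat.cast_zero, Nat.cast_one, add_zero, zero_add]
  have htot : 2 * (m + 2) ≤ ∑ i : Fin (m + 2), ∑ k ∈ Finset.range 5,
      (if i + (k : ℕ) ∈ D then (1:ℕ) else 0) := by
    calc 2 * (m + 2) = ∑ _i : Fin (m + 2), 2 := by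
          simp [Finset.card_univ, mul_comm]
      _ ≤ _ := Finset.sum_le_sum fun i _ => by rw [hsum i]; exact key i
  have hcount : ∑ i : Fin (m + 2), ∑ k ∈ Finset.range 5,
      (if i + (k : ℕ) ∈ D then (1:ℕ) else 0) = 5 * D.ncard := by
    rw [Finset.sum_comm]
    have hone : ∀ c : Fin (m + 2),
        (∑ i : Fin (m + 2), if i + c ∈ D then (1:ℕ) else 0) = D.ncard := by
      intro c
      have := Fintype.sum_bijective (· + c) (Equiv.addRight c).bijective
        (fun i : Fin (m+2) => if i + c ∈ D then (1:ℕ) else 0)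
        (fun j : Fin (m+2) => if j ∈ D then (1:ℕ) else 0) (fun i => rfl)
      rw [this, Set.ncard_eq_toFinset_card' D]
      simp only [← Set.mem_toFinset]
      rw [Finset.sum_ite_mem, Finset.univ_inter, Finset.sum_const, smul_eq_mul, mul_one]
    rw [Finset.sum_congr rfl fun k _ => hone (k : ℕ), Finset.sum_const]
    simp [mul_comm]
  omega
end
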